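/- Let r_k = α k^{−δ} with α > 0, δ > 0, and define s_k = r_k − (r_{k+1} − r_k)²/(r_{k+2} − 2r_{k+1} + r_k). Then s_k²/r_k² → 1/(δ+1)² as k → ∞. -/

import Mathlib

open Filter

open Real


-- positivity of the second difference
lemma aux_Dpos (q x : ℝ) (hq : q < 0) (hx : 0 < x) :
    0 < (1 + 2*x) ^ q - 2 * (1 + x) ^ q + 1 := by
  have h1 : (0:ℝ) < 1 + 2*x := by linarith
  have h2 : (0:ℝ) < 1 + x := by linarith
  have hlt : 1 + 2*x < (1 + x) ^ (2:ℝ) := by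
    have : (1 + x) ^ (2:ℝ) = (1 + x) ^ (2:ℕ) := by
      rw [← Real.rpow_natCast (1+x) 2]; norm_num
    rw [this]; nlinarith
  have hb : ((1 + x) ^ (2:ℝ)) ^ q < (1 + 2*x) ^ q :=
    Real.rpow_lt_rpow_of_neg h1 hlt hq
  have heq : ((1 + x) ^ (2:ℝ)) ^ q = ((1 + x) ^ q) ^ 2 := by
    rw [← Real.rpow_natCast ((1+x)^q) 2, ← Real.rpow_mul h2.le, ← Real.rpow_mul h2.le]
    norm_num [mul_comm]
  rw [heq] at hb
  nlinarith [sq_nonneg ((1+x)^q - 1)]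

lemma aux_slope (q : ℝ) :
    Tendsto (fun x : ℝ => ((1 + x) ^ q - 1) / x) (nhdsWithin 0 (Set.Ioi 0)) (nhds q) := by
  have hinner : HasDerivAt (fun x : ℝ => 1 + x) 1 0 := by
    simpa using (hasDerivAt_id (0:ℝ)).const_add 1
  have h : HasDerivAt (fun x : ℝ => (1 + x) ^ q) q 0 := by
    have := hinner.rpow_const (p := q) (Or.inl (by norm_num))
    simpa using this
  have h2 := hasDerivAt_iff_tendsto_slope.mp h
  have h3 : Tendsto (fun x : ℝ => ((1 + x) ^ q - 1) / x) (nhdsWithin 0 {(0:ℝ)}ᶜ) (nhds q) := by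
    refine h2.congr ?_
    intro x
    simp [slope_fun_def, Real.one_rpow, div_eq_inv_mul]
  exact h3.mono_left (nhdsWithin_mono _ fun x hx => ne_of_gt hx)

lemma aux_two : Tendsto (fun x : ℝ => 2 * x) (nhdsWithin 0 (Set.Ioi 0)) (nhdsWithin 0 (Set.Ioi 0)) := by
  refine tendsto_nhdsWithin_iff.mpr ⟨?_, ?_⟩
  · have : Tendsto (fun x : ℝ => 2 * x) (nhds 0) (nhds (2 * 0)) :=
      (continuous_const.mul continuous_id).tendsto 0
    simpa using this.mono_left nhdsWithin_le_nhds
  · filter_upwards [self_mem_nhdsWithin] with x hx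
    have : (0:ℝ) < x := hx
    simp [Set.mem_Ioi]; linarith

lemma aux_D (q : ℝ) :
    Tendsto (fun x : ℝ => ((1 + 2*x) ^ q - 2 * (1 + x) ^ q + 1) / x ^ 2)
      (nhdsWithin 0 (Set.Ioi 0)) (nhds (q * (q - 1))) := by
  have key := HasDerivAt.lhopital_zero_nhdsGT
    (f := fun x : ℝ => (1 + 2*x) ^ q - 2 * (1 + x) ^ q + 1)
    (f' := fun x : ℝ => q * (1 + 2*x) ^ (q-1) * 2 - 2 * (q * (1 + x) ^ (q-1) * 1))
    (g := fun x : ℝ => x ^ 2) (g' := fun x : ℝ => 2 * x) (a := 0) (l := nhds (q * (q-1)))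
  apply key
  · filter_upwards [self_mem_nhdsWithin] with x hx
    have hx' : (0:ℝ) < x := hx
    have hi1 : HasDerivAt (fun y : ℝ => 1 + 2*y) 2 x := by
      simpa using ((hasDerivAt_id x).const_mul 2).const_add 1
    have hi2 : HasDerivAt (fun y : ℝ => 1 + y) 1 x := by
      simpa using (hasDerivAt_id x).const_add 1
    have h1 : HasDerivAt (fun y : ℝ => (1 + 2*y) ^ q) (q * (1 + 2*x) ^ (q-1) * 2) x := by
      have := hi1.rpow_const (p := q) (Or.inl (by nlinarith))
      convert this using 1; ring
    have h2 : HasDerivAt (fun y : ℝ => (1 + y) ^ q) (q * (1 + x) ^ (q-1) * 1) x := by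
      have := hi2.rpow_const (p := q) (Or.inl (by nlinarith))
      convert this using 1; ring
    exact (h1.sub (h2.const_mul 2)).add_const 1
  · filter_upwards [] with x
    simpa using hasDerivAt_pow 2 x
  · filter_upwards [self_mem_nhdsWithin] with x hx
    have : (0:ℝ) < x := hx
    positivity
  · have hc1 : ContinuousAt (fun x : ℝ => (1 + 2*x) ^ q) 0 := by
      apply ContinuousAt.comp (Real.continuousAt_rpow_const _ _ (Or.inl (by norm_num)))
      fun_prop
    have hc2 : ContinuousAt (fun x : ℝ => (1 + x) ^ q) 0 := by
      apply ContinuousAt.comp (Real.continuousAt_rpow_const _ _ (Or.inl (by norm_num)))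
      fun_prop
    have hc : ContinuousAt (fun x : ℝ => (1 + 2*x) ^ q - 2 * (1 + x) ^ q + 1) 0 :=
      (hc1.sub (hc2.const_mul 2)).add continuousAt_const
    have := hc.tendsto
    have h0 : ((1 + 2*(0:ℝ)) ^ q - 2 * (1 + (0:ℝ)) ^ q + 1) = 0 := by norm_num
    rw [h0] at this
    exact this.mono_left nhdsWithin_le_nhds
  · have : Tendsto (fun x : ℝ => x ^ 2) (nhds (0:ℝ)) (nhds 0) := by
      simpa using (continuous_pow 2).tendsto (0:ℝ)
    exact this.mono_left nhdsWithin_le_nhds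
  · -- f'/g' tendsto
    have hA := aux_slope (q - 1)
    have hB := hA.comp aux_two
    have hcomb := ((hB.const_mul (2*q)).sub (hA.const_mul q))
    have hlim : 2 * q * (q - 1) - q * (q - 1) = q * (q - 1) := by ring
    rw [hlim] at hcomb
    refine hcomb.congr' ?_
    filter_upwards [self_mem_nhdsWithin] with x hx
    have hx' : (0:ℝ) < x := hx
    have hxne : x ≠ 0 := ne_of_gt hx'
    simp only [Function.comp]
    field_simp
    ring

lemma aux_main (q : ℝ) (hq : q < 0) :
    Tendsto (fun x : ℝ => (1 - ((1 + x) ^ q - 1) ^ 2 / ((1 + 2*x) ^ q - 2 * (1 + x) ^ q + 1)) ^ 2)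
      (nhdsWithin 0 (Set.Ioi 0)) (nhds (1 / (q - 1) ^ 2)) := by
  have hN : Tendsto (fun x : ℝ => (((1 + x) ^ q - 1) / x) ^ 2)
      (nhdsWithin 0 (Set.Ioi 0)) (nhds (q ^ 2)) := (aux_slope q).pow 2
  have hDne : q * (q - 1) ≠ 0 :=
    mul_ne_zero (ne_of_lt hq) (by intro h; nlinarith)
  have hratio := hN.div (aux_D q) hDne
  have hratio' : Tendsto (fun x : ℝ => ((1 + x) ^ q - 1) ^ 2 / ((1 + 2*x) ^ q - 2 * (1 + x) ^ q + 1))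
      (nhdsWithin 0 (Set.Ioi 0)) (nhds (q ^ 2 / (q * (q - 1)))) := by
    refine hratio.congr' ?_
    filter_upwards [self_mem_nhdsWithin] with x hx
    have hx' : (0:ℝ) < x := hx
    have hD := aux_Dpos q x hq hx'
    simp only [Pi.div_apply]
    field_simp
    try ring
  have hfin := (hratio'.const_sub 1).pow 2
  have hval : (1 - q ^ 2 / (q * (q - 1))) ^ 2 = 1 / (q - 1) ^ 2 := by
    have h1 : q ≠ 0 := by linarith
    have h2 : q - 1 ≠ 0 := by intro h; nlinarith
    field_simp
    try ring
  rwa [hval] at hfin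

/-- For `r_k = α k^{−δ}` with `α, δ > 0` and
`s_k = r_k − (r_{k+1} − r_k)²/(r_{k+2} − 2r_{k+1} + r_k)`, one has
`s_k²/r_k² → 1/(δ+1)²` as `k → ∞`. -/
theorem stmt_13 (α δ : ℝ) (hα : 0 < α) (hδ : 0 < δ) (r s : ℕ → ℝ)
    (hr : ∀ k, r k = α * (k : ℝ) ^ (-δ))
    (hs : ∀ k, s k = r k - (r (k + 1) - r k) ^ 2
                        / (r (k + 2) - 2 * r (k + 1) + r k)) :
    Tendsto (fun k : ℕ => (s k) ^ 2 / (r k) ^ 2) atTop (nhds (1 / (δ + 1) ^ 2)) := by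
  have hq : (-δ) < 0 := by linarith
  have hinv : Tendsto (fun k : ℕ => ((k:ℝ))⁻¹) atTop (nhdsWithin 0 (Set.Ioi 0)) := by
    refine tendsto_nhdsWithin_iff.mpr ⟨?_, ?_⟩
    · exact tendsto_inv_atTop_zero.comp tendsto_natCast_atTop_atTop
    · filter_upwards [eventually_gt_atTop 0] with k hk
      have : (0:ℝ) < (k:ℝ) := by exact_mod_cast hk
      simp [Set.mem_Ioi]; positivity
  have hmain := (aux_main (-δ) hq).comp hinv
  have hval : (1 / ((-δ) - 1) ^ 2) = 1 / (δ + 1) ^ 2 := by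
    rw [show ((-δ) - 1) ^ 2 = (δ + 1) ^ 2 by ring]
  rw [hval] at hmain
  refine hmain.congr' ?_
  filter_upwards [eventually_ge_atTop 1] with k hk
  have hK : (0:ℝ) < (k:ℝ) := by exact_mod_cast Nat.pos_of_ne_zero (by omega)
  set K := (k:ℝ) with hKdef
  have hx : (0:ℝ) < K⁻¹ := by positivity
  have h1 : (1:ℝ) + K⁻¹ = (K + 1) / K := by field_simp
  have h2 : (1:ℝ) + 2*K⁻¹ = (K + 2) / K := by field_simp; try ring
  have ha : ((K + 1) / K) ^ (-δ) = (K + 1) ^ (-δ) / K ^ (-δ) :=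
    Real.div_rpow (by linarith) (by linarith) _
  have hb : ((K + 2) / K) ^ (-δ) = (K + 2) ^ (-δ) / K ^ (-δ) :=
    Real.div_rpow (by linarith) (by linarith) _
  have hD := aux_Dpos (-δ) K⁻¹ hq hx
  rw [h1, h2, ha, hb] at hD
  simp only [Function.comp, ← hKdef, h1, h2, ha, hb]
  rw [hs k, hr k, hr (k+1), hr (k+2)]
  push_cast
  set A := (K + 1) ^ (-δ)
  set B := (K + 2) ^ (-δ)
  set C := K ^ (-δ) with hCdef
  have hC : (0:ℝ) < C := Real.rpow_pos_of_pos hK _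
  have hne1 : B / C - 2 * (A / C) + 1 ≠ 0 := ne_of_gt hD
  have hkey : α * B - 2 * (α * A) + α * C = (α * C) * (B / C - 2 * (A / C) + 1) := by
    field_simp
  have hne2 : α * B - 2 * (α * A) + α * C ≠ 0 := by
    rw [hkey]
    exact mul_ne_zero (by positivity) hne1
  have hne3 : B - 2 * A + C ≠ 0 := by
    intro h
    apply hne2
    have : α * B - 2 * (α * A) + α * C = α * (B - 2 * A + C) := by ring
    rw [this, h, mul_zero]
  have hbase : α * C - (α * A - α * C) ^ 2 / (α * B - 2 * (α * A) + α * C)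
      = (1 - (A / C - 1) ^ 2 / (B / C - 2 * (A / C) + 1)) * (α * C) := by
    field_simp [hne1, hne2, hne3]
  rw [hbase, mul_pow, mul_div_assoc,
    div_self (by positivity : (α * C) ^ 2 ≠ 0), mul_one]
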